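/- In the partial evacuation model, the fluxes qᵢ = min{Sᵢ, (1/ξ_j) S_j − S_j, max{D₀ − S_j, αᵢ D₀}} with ξ₁ + ξ₂ ≤ 1, αᵢ ∈ [ξᵢ, 1 − ξ_j], α₁ + α₂ = 1, satisfy the FIFO lower bound qᵢ ≥ ξᵢ (q₁ + q₂) for i = 1, 2. -/

import Mathlib

lemma fifo_aux (D₀ S₁ S₂ ξ₁ ξ₂ α₁ α₂ q₁ q₂ : ℝ)
    (hD₀ : 0 ≤ D₀) (hS₁ : 0 ≤ S₁) (hS₂ : 0 ≤ S₂)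
    (h0ξ₁ : 0 < ξ₁) (h0ξ₂ : 0 < ξ₂) (hξ : ξ₁ + ξ₂ ≤ 1)
    (hα₁l : ξ₁ ≤ α₁) (hα₂u : α₂ ≤ 1 - ξ₁)
    (hq₁ : q₁ = min S₁ (min ((1 - ξ₂) / ξ₂ * S₂) (max (D₀ - S₂) (α₁ * D₀))))
    (hq₂ : q₂ = min S₂ (min ((1 - ξ₁) / ξ₁ * S₁) (max (D₀ - S₁) (α₂ * D₀)))) :
    ξ₁ * (q₁ + q₂) ≤ q₁ := by
  have h2 : q₂ ≤ S₂ := by rw [hq₂]; exact min_le_left _ _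
  have h4 : q₂ ≤ (1 - ξ₁) / ξ₁ * S₁ := by
    rw [hq₂]; exact le_trans (min_le_right _ _) (min_le_left _ _)
  have h4' : q₂ * ξ₁ ≤ (1 - ξ₁) * S₁ := by
    rw [div_mul_eq_mul_div, le_div_iff₀ h0ξ₁] at h4; exact h4
  have h5 : q₂ ≤ max (D₀ - S₁) (α₂ * D₀) := by
    rw [hq₂]; exact le_trans (min_le_right _ _) (min_le_right _ _)
  rcases le_total S₁ (min ((1 - ξ₂) / ξ₂ * S₂) (max (D₀ - S₂) (α₁ * D₀))) with hA | hA
  · -- q₁ = S₁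
    rw [hq₁, min_eq_left hA]
    nlinarith
  · rw [hq₁, min_eq_right hA]
    rcases le_total ((1 - ξ₂) / ξ₂ * S₂) (max (D₀ - S₂) (α₁ * D₀)) with hB | hB
    · -- q₁ = (1-ξ₂)/ξ₂ * S₂
      rw [min_eq_left hB]
      have hT : ξ₂ * ((1 - ξ₂) / ξ₂ * S₂) = (1 - ξ₂) * S₂ := by
        field_simp
      nlinarith [mul_le_mul_of_nonneg_left h2 h0ξ₁.le, sq_nonneg (ξ₁ - ξ₂)]
    · -- q₁ = max (D₀ - S₂) (α₁ * D₀)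
      rw [min_eq_right hB]
      set M := max (D₀ - S₂) (α₁ * D₀) with hM
      have hMα : α₁ * D₀ ≤ M := le_max_right _ _
      have hMξ : ξ₁ * D₀ ≤ M := le_trans (by nlinarith) hMα
      have hMS₁ : M ≤ S₁ := le_trans (le_min hB (le_refl _)) hA |>.trans (le_refl _) |>.trans (le_refl _)
      rcases le_max_iff.mp h5 with h5a | h5b
      · -- q₂ ≤ D₀ - S₁ ≤ D₀ - M
        have : q₂ ≤ D₀ - M := by linarith
        nlinarith [mul_le_mul_of_nonneg_left this h0ξ₁.le]
      · -- q₂ ≤ α₂ * D₀ ≤ (1-ξ₁) * D₀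
        have : q₂ ≤ (1 - ξ₁) * D₀ := le_trans h5b (by nlinarith)
        nlinarith [mul_le_mul_of_nonneg_left this h0ξ₁.le]

theorem partial_evacuation_fifo_bound
    (D₀ S₁ S₂ ξ₁ ξ₂ α₁ α₂ : ℝ)
    (hD₀ : 0 ≤ D₀) (hS₁ : 0 ≤ S₁) (hS₂ : 0 ≤ S₂)
    (hξ₁ : ξ₁ ∈ Set.Ioo (0:ℝ) 1) (hξ₂ : ξ₂ ∈ Set.Ioo (0:ℝ) 1)
    (hξ : ξ₁ + ξ₂ ≤ 1)
    (hα₁ : α₁ ∈ Set.Icc ξ₁ (1 - ξ₂)) (hα₂ : α₂ ∈ Set.Icc ξ₂ (1 - ξ₁))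
    (hα : α₁ + α₂ = 1)
    (q₁ q₂ : ℝ)
    (hq₁ : q₁ = min S₁ (min ((1 - ξ₂) / ξ₂ * S₂) (max (D₀ - S₂) (α₁ * D₀))))
    (hq₂ : q₂ = min S₂ (min ((1 - ξ₁) / ξ₁ * S₁) (max (D₀ - S₁) (α₂ * D₀)))) :
    ξ₁ * (q₁ + q₂) ≤ q₁ ∧ ξ₂ * (q₁ + q₂) ≤ q₂ := by
  constructor
  · exact fifo_aux D₀ S₁ S₂ ξ₁ ξ₂ α₁ α₂ q₁ q₂ hD₀ hS₁ hS₂ hξ₁.1 hξ₂.1 hξ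
      hα₁.1 hα₂.2 hq₁ hq₂
  · have := fifo_aux D₀ S₂ S₁ ξ₂ ξ₁ α₂ α₁ q₂ q₁ hD₀ hS₂ hS₁ hξ₂.1 hξ₁.1
      (by linarith) hα₂.1 hα₁.2 hq₂ hq₁
    linarith
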